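/- Let α = (1+√−7)/2 and let P be a Hermitian ℤ[α]-lattice of rank ≥ 2 with Hermitian minimum m. Then every free rank-2 ℤ[α]-sublattice of P has discriminant at least 3m²/7; i.e. d_2(P) ≥ 3m²/7. -/

import Mathlib

open Matrix Complex
open scoped ComplexOrder

/-- α = (1+√−7)/2, a root of α² − α + 2 = 0, realized in ℂ. -/
noncomputable def α7 : ℂ := (1 + Complex.I * Real.sqrt 7) / 2

/-- The ring of integers ℤ[α] of ℚ(√−7), as a subset of ℂ. -/
noncomputable def O7 : Set ℂ := {z | ∃ a b : ℤ, z = (a : ℂ) + (b : ℂ) * α7}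

/-- ℚ(√−7) as a subset of ℂ. -/
noncomputable def K7 : Set ℂ := {z | ∃ u v : ℚ, z = (u : ℂ) + (v : ℂ) * (Complex.I * Real.sqrt 7)}



lemma quadrant (r t : ℚ) (h0r : 0 ≤ r) (h0t : 0 ≤ t) (hr : r ≤ 1/2) (ht : t ≤ 1/4)
    (hc : 4/7 < r^2 + 7*t^2) : (r - 1/2)^2 + 7*(t - 1/2)^2 ≤ 4/7 := by
  have hA : (0:ℚ) ≤ 1/2 - r := by linarith
  have prod1 : (0:ℚ) ≤ (1/2 - r) * r := mul_nonneg hA h0r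
  have hγpos : (0:ℚ) < t - 3/14 := by nlinarith [prod1]
  have hγle : t - 3/14 ≤ 1/28 := by linarith
  have prod2 : (0:ℚ) ≤ (t - 3/14) * (1/28 - (t - 3/14)) :=
    mul_nonneg hγpos.le (by linarith)
  have step : 1/2 - r < 13*(t - 3/14)/2 := by nlinarith [prod1, prod2]
  have prod3 : (0:ℚ) ≤ (1/2 - r) * (13*(t - 3/14)/2 - (1/2 - r)) :=
    mul_nonneg hA (by linarith)
  have prod4 : (0:ℚ) ≤ (t - 3/14) * r := mul_nonneg hγpos.le h0r
  nlinarith [prod2, prod3, prod4]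

lemma euclid_rat (u v : ℚ) : ∃ a b : ℤ, (u - a - b/2)^2 + 7*(v - b/2)^2 ≤ 4/7 := by
  set b0 : ℤ := round (2*v) with hb0
  have ht : |2*v - b0| ≤ 1/2 := by rw [hb0]; exact abs_sub_round (2*v)
  have ht' : |v - b0/2| ≤ 1/4 := by
    rw [abs_le] at *; constructor <;> [linarith [ht.1]; linarith [ht.2]]
  set a0 : ℤ := round (u - b0/2) with ha0
  have hr : |u - b0/2 - a0| ≤ 1/2 := abs_sub_round _
  have hr' : |u - a0 - b0/2| ≤ 1/2 := by
    rw [show u - a0 - (b0:ℚ)/2 = u - b0/2 - a0 by ring]; exact hr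
  set r : ℚ := u - a0 - b0/2 with hrdef
  set t : ℚ := v - b0/2 with htdef
  by_cases hc : r^2 + 7*t^2 ≤ 4/7
  · exact ⟨a0, b0, hc⟩
  · push_neg at hc
    have habs_r := abs_le.mp hr'
    have habs_t := abs_le.mp ht'
    rcases le_or_gt 0 t with hts | hts <;> rcases le_or_gt 0 r with hrs | hrs
    · refine ⟨a0, b0 + 1, ?_⟩
      have q := quadrant r t hrs hts habs_r.2 habs_t.2 hc
      simp only [hrdef, htdef] at q
      push_cast
      linarith [q]
    · refine ⟨a0 - 1, b0 + 1, ?_⟩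
      have q := quadrant (-r) t (by linarith) hts (by linarith [habs_r.1]) habs_t.2
        (by nlinarith [hc])
      simp only [hrdef, htdef] at q
      push_cast
      linarith [q]
    · refine ⟨a0 + 1, b0 - 1, ?_⟩
      have q := quadrant r (-t) hrs (by linarith) habs_r.2 (by linarith [habs_t.1])
        (by nlinarith [hc])
      simp only [hrdef, htdef] at q
      push_cast
      linarith [q]
    · refine ⟨a0, b0 - 1, ?_⟩
      have q := quadrant (-r) (-t) (by linarith) (by linarith) (by linarith [habs_r.1])
        (by linarith [habs_t.1]) (by nlinarith [hc])
      simp only [hrdef, htdef] at q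
      push_cast
      linarith [q]


lemma e7_sq : (Complex.I * (Real.sqrt 7 : ℝ))^2 = -7 := by
  have h : ((Real.sqrt 7 : ℝ) : ℂ)^2 = 7 := by
    norm_cast
    rw [Real.sq_sqrt]; norm_num
  rw [mul_pow, Complex.I_sq, h]; ring
lemma α7_sq : α7 * α7 = α7 - 2 := by
  have h := e7_sq
  unfold α7
  linear_combination (1/4 : ℂ) * h

noncomputable def R7 : Subring ℂ where
  carrier := O7
  zero_mem' := ⟨0, 0, by push_cast; ring⟩
  one_mem' := ⟨1, 0, by push_cast; ring⟩
  add_mem' := by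
    rintro x y ⟨a, b, rfl⟩ ⟨c, d, rfl⟩
    exact ⟨a + c, b + d, by push_cast; ring⟩
  neg_mem' := by
    rintro x ⟨a, b, rfl⟩
    exact ⟨-a, -b, by push_cast; ring⟩
  mul_mem' := by
    rintro x y ⟨a, b, rfl⟩ ⟨c, d, rfl⟩
    refine ⟨a*c - 2*b*d, a*d + b*c + b*d, ?_⟩
    push_cast
    linear_combination (b*d : ℂ) * α7_sq

noncomputable def F7 : Subring ℂ where
  carrier := K7
  zero_mem' := ⟨0, 0, by push_cast; ring⟩
  one_mem' := ⟨1, 0, by push_cast; ring⟩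
  add_mem' := by
    rintro x y ⟨a, b, rfl⟩ ⟨c, d, rfl⟩
    exact ⟨a + c, b + d, by push_cast; ring⟩
  neg_mem' := by
    rintro x ⟨a, b, rfl⟩
    exact ⟨-a, -b, by push_cast; ring⟩
  mul_mem' := by
    rintro x y ⟨a, b, rfl⟩ ⟨c, d, rfl⟩
    refine ⟨a*c - 7*b*d, a*d + b*c, ?_⟩
    push_cast
    linear_combination (b*d : ℂ) * e7_sq

lemma O7_subset_K7 : O7 ⊆ K7 := by
  rintro z ⟨a, b, rfl⟩
  exact ⟨a + b/2, b/2, by unfold α7; push_cast; ring⟩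

lemma star_α7 : (starRingEnd ℂ) α7 = 1 - α7 := by
  unfold α7
  rw [map_div₀, _root_.map_add, _root_.map_one, _root_.map_mul, Complex.conj_I, Complex.conj_ofReal,
    map_ofNat]
  ring

lemma O7_star {z : ℂ} (h : z ∈ O7) : star z ∈ O7 := by
  obtain ⟨a, b, rfl⟩ := h
  refine ⟨a + b, -b, ?_⟩
  simp only [RCLike.star_def, _root_.map_add, _root_.map_mul, star_α7, map_intCast]
  push_cast
  ring

lemma K7_star {z : ℂ} (h : z ∈ K7) : star z ∈ K7 := by
  obtain ⟨u, v, rfl⟩ := h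
  refine ⟨u, -v, ?_⟩
  have : (starRingEnd ℂ) (Complex.I * (Real.sqrt 7:ℝ)) = -(Complex.I * (Real.sqrt 7:ℝ)) := by
    simp [mul_comm]
  simp only [RCLike.star_def, _root_.map_add, _root_.map_mul, this, map_ratCast]
  push_cast
  ring

lemma K7_real {z : ℂ} (h : z ∈ K7) (him : z.im = 0) : ∃ u : ℚ, z = (u:ℂ) := by
  obtain ⟨u, v, rfl⟩ := h
  have h7 : Real.sqrt 7 > 0 := Real.sqrt_pos.mpr (by norm_num)
  have : ((u:ℂ) + (v:ℂ) * (Complex.I * Real.sqrt 7)).im = v * Real.sqrt 7 := by simp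
  rw [this] at him
  have hv : (v:ℝ) = 0 := by
    rcases mul_eq_zero.mp him with h | h
    · exact h
    · exact absurd h (ne_of_gt h7)
  have hv' : v = 0 := by exact_mod_cast hv
  exact ⟨u, by rw [hv']; push_cast; ring⟩

lemma O7_real_int {z : ℂ} (h : z ∈ O7) (him : z.im = 0) : ∃ k : ℤ, z = (k:ℂ) := by
  obtain ⟨a, b, rfl⟩ := h
  have h7 : Real.sqrt 7 > 0 := Real.sqrt_pos.mpr (by norm_num)
  have hα : α7.im = Real.sqrt 7 / 2 := by simp [α7]
  have : ((a:ℂ) + (b:ℂ) * α7).im = b * (Real.sqrt 7 / 2) := by simp [hα]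
  rw [this] at him
  have hb : (b:ℝ) = 0 := by
    rcases mul_eq_zero.mp him with h | h
    · exact h
    · linarith
  have hb' : b = 0 := by exact_mod_cast hb
  exact ⟨a, by rw [hb']; push_cast; ring⟩


lemma euclid_K7 {z : ℂ} (hz : z ∈ K7) : ∃ q ∈ O7, Complex.normSq (z - q) ≤ 4/7 := by
  obtain ⟨u, v, rfl⟩ := hz
  obtain ⟨a, b, hab⟩ := euclid_rat u v
  refine ⟨(a:ℂ) + (b:ℂ) * α7, ⟨a, b, rfl⟩, ?_⟩
  have hre : ((u:ℂ) + (v:ℂ) * (Complex.I * Real.sqrt 7) - ((a:ℂ) + (b:ℂ) * α7)).re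
      = ((u - a - b/2 : ℚ) : ℝ) := by
    simp [α7]
    push_cast
    ring
  have him : ((u:ℂ) + (v:ℂ) * (Complex.I * Real.sqrt 7) - ((a:ℂ) + (b:ℂ) * α7)).im
      = ((v - b/2 : ℚ) : ℝ) * Real.sqrt 7 := by
    simp [α7]
    push_cast
    ring
  rw [Complex.normSq_apply, hre, him]
  have h7 : (Real.sqrt 7) * (Real.sqrt 7) = 7 := Real.mul_self_sqrt (by norm_num)
  have : (((u - a - b/2 : ℚ):ℝ))^2 + 7*(((v - b/2 : ℚ):ℝ))^2 ≤ 4/7 := by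
    have h2 := (Rat.cast_le (K := ℝ)).mpr hab
    push_cast at h2 ⊢
    linarith [h2]
  nlinarith [this, h7, sq_nonneg (((v - b/2 : ℚ):ℝ))]

section FormLemmas

variable {n : ℕ} {G : Matrix (Fin n) (Fin n) ℂ}

lemma form_mem_K7 (hGK : ∀ i j, G i j ∈ K7) {x y : Fin n → ℂ}
    (hx : ∀ i, x i ∈ O7) (hy : ∀ i, y i ∈ O7) : star x ⬝ᵥ G.mulVec y ∈ K7 := by
  show star x ⬝ᵥ G.mulVec y ∈ F7
  simp only [dotProduct, Matrix.mulVec, Pi.star_apply]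
  refine Subring.sum_mem _ fun i _ => ?_
  refine Subring.mul_mem _ (K7_star (O7_subset_K7 (hx i))) ?_
  exact Subring.sum_mem _ fun j _ => Subring.mul_mem _ (hGK i j) (O7_subset_K7 (hy j))

lemma form_int (N : ℕ) (hN : ∀ i j, (N:ℂ) * G i j ∈ O7) {x y : Fin n → ℂ}
    (hx : ∀ i, x i ∈ O7) (hy : ∀ i, y i ∈ O7) :
    (N:ℂ) * (star x ⬝ᵥ G.mulVec y) ∈ O7 := by
  have hrw : (N:ℂ) * (star x ⬝ᵥ G.mulVec y)
      = ∑ i, ∑ j, star (x i) * ((N:ℂ) * G i j * y j) := by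
    simp only [dotProduct, Matrix.mulVec, Pi.star_apply, Finset.mul_sum]
    exact Finset.sum_congr rfl fun i _ => Finset.sum_congr rfl fun j _ => by ring
  rw [hrw]
  show _ ∈ R7
  refine Subring.sum_mem _ fun i _ => Subring.sum_mem _ fun j _ => ?_
  exact Subring.mul_mem _ (O7_star (hx i)) (Subring.mul_mem _ (hN i j) (hy j))

lemma form_conj (hH : G.IsHermitian) (x y : Fin n → ℂ) :
    star y ⬝ᵥ G.mulVec x = star (star x ⬝ᵥ G.mulVec y) := by
  rw [star_dotProduct, Matrix.star_mulVec, hH.eq, ← Matrix.dotProduct_mulVec]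

lemma form_pos (hG : G.PosDef) {v : Fin n → ℂ} (hv : v ≠ 0) :
    0 < (star v ⬝ᵥ G.mulVec v).re ∧ (star v ⬝ᵥ G.mulVec v).im = 0 := by
  have := hG.dotProduct_mulVec_pos hv
  rw [Complex.lt_def] at this
  exact ⟨by simpa using this.1, by simpa using this.2.symm⟩

end FormLemmas

lemma clear_den (q : ℚ) (M : ℕ) (h : q.den ∣ M) : ∃ z : ℤ, (M:ℚ) * q = z := by
  obtain ⟨c, hc⟩ := h
  refine ⟨c * q.num, ?_⟩
  have hden : ((q.den:ℚ)) ≠ 0 := by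
    exact_mod_cast q.den_nz
  have hmul : (q.den:ℚ) * q = q.num := by
    conv_lhs => rw [show ((q.den:ℚ)) * q = (q.den:ℚ) * ((q.num:ℚ) / (q.den:ℚ)) by
      rw [Rat.num_div_den]]
    field_simp
  rw [hc]
  push_cast
  rw [mul_comm (q.den : ℚ) (c:ℚ), mul_assoc, hmul]

section Descent

variable {n : ℕ} {G : Matrix (Fin n) (Fin n) ℂ}

lemma descent (hG : G.PosDef) (hGK : ∀ i j, G i j ∈ K7)
    (m : ℝ) (hm0 : 0 < m)
    (hmle : ∀ v : Fin n → ℂ, (∀ i, v i ∈ O7) → v ≠ 0 → m ≤ (star v ⬝ᵥ G.mulVec v).re)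
    (N : ℕ) (hNpos : 0 < N) (hN : ∀ i j, (N:ℂ) * G i j ∈ O7) :
    ∀ k : ℕ, ∀ y0 y1 : Fin n → ℂ, (∀ i, y0 i ∈ O7) → (∀ i, y1 i ∈ O7) →
      (∀ c d : ℂ, c • y0 + d • y1 = 0 → c = 0 ∧ d = 0) →
      (N : ℝ) * (star y0 ⬝ᵥ G.mulVec y0).re ≤ k →
      3 * m ^ 2 / 7 ≤ ((star y0 ⬝ᵥ G.mulVec y0) * (star y1 ⬝ᵥ G.mulVec y1)
        - (star y0 ⬝ᵥ G.mulVec y1) * (star y1 ⬝ᵥ G.mulVec y0)).re := by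
  intro k
  induction k with
  | zero =>
    intro y0 y1 hy0 hy1 hind hk
    exfalso
    have h0 : y0 ≠ 0 := by
      intro h
      exact one_ne_zero (hind 1 0 (by simp [h])).1
    have hA := hmle y0 hy0 h0
    have hpos : (0:ℝ) < (N:ℝ) * (star y0 ⬝ᵥ G.mulVec y0).re :=
      mul_pos (by exact_mod_cast hNpos) (lt_of_lt_of_le hm0 hA)
    have hk' : (N:ℝ) * (star y0 ⬝ᵥ G.mulVec y0).re ≤ 0 := by exact_mod_cast hk
    linarith
  | succ k ih =>
    intro y0 y1 hy0 hy1 hind hk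
    have h0 : y0 ≠ 0 := by
      intro h
      exact one_ne_zero (hind 1 0 (by simp [h])).1
    set h00 := star y0 ⬝ᵥ G.mulVec y0 with h00_def
    set h01 := star y0 ⬝ᵥ G.mulVec y1 with h01_def
    set h10 := star y1 ⬝ᵥ G.mulVec y0 with h10_def
    set h11 := star y1 ⬝ᵥ G.mulVec y1 with h11_def
    obtain ⟨hApos, hAim⟩ := form_pos hG h0
    set A := h00.re with hA_def
    have hAe : h00 = (A:ℂ) := Complex.ext rfl (by simpa using hAim)
    have hAm : m ≤ A := hmle y0 hy0 h0
    have h00ne : h00 ≠ 0 := by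
      rw [hAe]
      exact_mod_cast ne_of_gt hApos
    have hβK : h01 / h00 ∈ K7 := by
      obtain ⟨u0, hu0⟩ := K7_real (form_mem_K7 hGK hy0 hy0) hAim
      obtain ⟨u1, v1, h01eq⟩ := form_mem_K7 hGK hy0 hy1
      rw [← h00_def] at hu0
      rw [← h01_def] at h01eq
      have hu0ne : (u0:ℚ) ≠ 0 := by
        intro h
        rw [h] at hu0
        push_cast at hu0
        exact h00ne hu0
      have hu0C : ((u0:ℚ):ℂ) ≠ 0 := by exact_mod_cast hu0ne
      refine ⟨u1/u0, v1/u0, ?_⟩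
      rw [h01eq, hu0]
      push_cast
      field_simp
    obtain ⟨q, hqO, hq⟩ := euclid_K7 hβK
    set v : Fin n → ℂ := y1 - q • y0 with hv_def
    have hvO : ∀ i, v i ∈ O7 := by
      intro i
      show y1 i - q * y0 i ∈ O7
      exact Subring.sub_mem R7 (hy1 i) (Subring.mul_mem R7 hqO (hy0 i))
    have hvne : v ≠ 0 := by
      intro h
      have h' : q • y0 + (-1:ℂ) • y1 = 0 := by
        have : -(y1 - q • y0) = (0 : Fin n → ℂ) := by rw [← hv_def, h, neg_zero]
        calc q • y0 + (-1:ℂ) • y1 = -(y1 - q • y0) := by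
              rw [neg_one_smul, neg_sub]; abel
          _ = 0 := this
      have := (hind q (-1) h').2
      norm_num at this
    -- form expansions
    have E2 : star y0 ⬝ᵥ G.mulVec v = h01 - q * h00 := by
      rw [hv_def, Matrix.mulVec_sub, Matrix.mulVec_smul, dotProduct_sub, dotProduct_smul,
        smul_eq_mul, ← h01_def, ← h00_def]
    have E3 : star v ⬝ᵥ G.mulVec y0 = h10 - star q * h00 := by
      rw [hv_def, star_sub, star_smul, sub_dotProduct, smul_dotProduct, smul_eq_mul,
        ← h10_def, ← h00_def]
    have E1 : star v ⬝ᵥ G.mulVec v = h11 - star q * h01 - q * h10 + star q * q * h00 := by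
      rw [hv_def, star_sub, star_smul, sub_dotProduct, smul_dotProduct,
        Matrix.mulVec_sub, Matrix.mulVec_smul, dotProduct_sub, dotProduct_sub,
        dotProduct_smul, dotProduct_smul, smul_eq_mul, smul_eq_mul, smul_eq_mul,
        ← h00_def, ← h01_def, ← h10_def, ← h11_def]
      ring
    obtain ⟨hBpos, hBim⟩ := form_pos hG hvne
    set hvv := star v ⬝ᵥ G.mulVec v with hvv_def
    set h0v := star y0 ⬝ᵥ G.mulVec v with h0v_def
    set hv0 := star v ⬝ᵥ G.mulVec y0 with hv0_def
    set B := hvv.re with hB_def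
    have hBe : hvv = (B:ℂ) := Complex.ext rfl (by simpa using hBim)
    have hBm : m ≤ B := hmle v hvO hvne
    have hv0e : hv0 = star h0v := by
      rw [hv0_def, h0v_def]
      exact form_conj hG.1 y0 v
    have h10c : h10 = star h01 := by
      rw [h10_def, h01_def]
      exact form_conj hG.1 y0 y1
    have hdet : h00 * h11 - h01 * h10 = h00 * hvv - h0v * hv0 := by
      rw [E1, E2, E3, h10c]
      ring
    have h0v_eq : h0v = h00 * (h01 / h00 - q) := by
      rw [E2]
      field_simp
    have hns : Complex.normSq h0v ≤ 4/7 * A^2 := by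
      rw [h0v_eq, Complex.normSq_mul]
      have h1 : Complex.normSq h00 = A^2 := by
        rw [hAe, Complex.normSq_ofReal]; ring
      rw [h1]
      nlinarith [hq, sq_nonneg A]
    have hre : (h00 * h11 - h01 * h10).re = A * B - Complex.normSq h0v := by
      have hsq : h0v * star h0v = (Complex.normSq h0v : ℂ) := by
        rw [Complex.star_def, Complex.mul_conj]
      rw [hdet, hv0e, hsq, hAe, hBe, ← Complex.ofReal_mul, ← Complex.ofReal_sub,
        Complex.ofReal_re]
    rcases le_or_gt A B with hAB | hAB
    · rw [hre]
      nlinarith [mul_nonneg (sub_nonneg.mpr hAB) hApos.le,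
        mul_nonneg (sub_nonneg.mpr hAm) (by linarith : (0:ℝ) ≤ A + m), hns, hm0, hAm]
    · -- swap and recurse
      have hind' : ∀ c d : ℂ, c • v + d • y0 = 0 → c = 0 ∧ d = 0 := by
        intro c d hcd
        have hcd' : (d - c*q) • y0 + c • y1 = 0 := by
          rw [← hcd, hv_def]
          rw [smul_sub, smul_smul, sub_smul]
          abel
        obtain ⟨h1, h2⟩ := hind (d - c*q) c hcd'
        refine ⟨h2, ?_⟩
        rw [h2] at h1
        simpa using h1
      obtain ⟨kA, hkA⟩ := O7_real_int (form_int N hN hy0 hy0)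
        (by rw [← h00_def, hAe]; simp)
      obtain ⟨kB, hkB⟩ := O7_real_int (form_int N hN hvO hvO)
        (by rw [← hvv_def, hBe]; simp)
      rw [← h00_def, hAe] at hkA
      rw [← hvv_def, hBe] at hkB
      have hkA' : (N:ℝ) * A = kA := by
        have := congrArg Complex.re hkA
        push_cast at this ⊢
        simpa using this
      have hkB' : (N:ℝ) * B = kB := by
        have := congrArg Complex.re hkB
        push_cast at this ⊢
        simpa using this
      have hlt : kB < kA := by
        have hNR : (0:ℝ) < N := by exact_mod_cast hNpos
        have : (kB:ℝ) < kA := by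
          rw [← hkA', ← hkB']
          exact mul_lt_mul_of_pos_left hAB hNR
        exact_mod_cast this
      have hkAk : kA ≤ (k:ℤ) + 1 := by
        have : (kA:ℝ) ≤ (k:ℝ) + 1 := by
          rw [← hkA']
          push_cast at hk
          linarith
        exact_mod_cast this
      have hkBk : (N:ℝ) * (star v ⬝ᵥ G.mulVec v).re ≤ k := by
        rw [← hvv_def, ← hB_def, hkB']
        have : kB ≤ (k:ℤ) := by omega
        exact_mod_cast this
      have hih := ih v y0 hvO hy0 hind' hkBk
      have hswap : hvv * h00 - hv0 * h0v = h00 * h11 - h01 * h10 := by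
        rw [hdet]
        ring
      rw [← hvv_def, ← h00_def, ← hv0_def, ← h0v_def, hswap] at hih
      exact hih

end Descent

lemma e7_alpha : (Complex.I * (Real.sqrt 7:ℝ)) = 2*α7 - 1 := by
  unfold α7; ring

/-- Let P be a Hermitian ℤ[α]-lattice of rank n ≥ 2 (given by the positive
definite Hermitian Gram matrix `G` of an ℤ[α]-basis, entries in ℚ(√−7)), with
Hermitian minimum m.  Then every free rank-2 ℤ[α]-sublattice of P (spanned by
two ℂ-linearly independent coordinate vectors with entries in ℤ[α]) has
discriminant (Gram determinant) at least 3m²/7; i.e. d_2(P) ≥ 3m²/7. -/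
theorem stmt17 (n : ℕ) (hn : 2 ≤ n)
    (G : Matrix (Fin n) (Fin n) ℂ) (hGK : ∀ i j, G i j ∈ K7) (hG : G.PosDef)
    (m : ℝ)
    (hm : IsLeast {x : ℝ | ∃ v : Fin n → ℂ, (∀ i, v i ∈ O7) ∧ v ≠ 0 ∧
      (star v ⬝ᵥ G.mulVec v).re = x} m)
    (x : Fin 2 → Fin n → ℂ) (hxO : ∀ t i, x t i ∈ O7)
    (hxind : LinearIndependent ℂ x) :
    3 * m ^ 2 / 7 ≤ ((Matrix.of fun s t => star (x s) ⬝ᵥ G.mulVec (x t)).det).re := by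
  obtain ⟨v0, hv0O, hv0ne, hv0eq⟩ := hm.1
  have hm0 : 0 < m := by rw [← hv0eq]; exact (form_pos hG hv0ne).1
  have hmle : ∀ v : Fin n → ℂ, (∀ i, v i ∈ O7) → v ≠ 0 →
      m ≤ (star v ⬝ᵥ G.mulVec v).re := by
    intro v hvO hvne
    exact hm.2 ⟨v, hvO, hvne, rfl⟩
  choose u v huv using hGK
  set N : ℕ := ∏ i, ∏ j, ((u i j).den * (v i j).den) with hN_def
  have hNpos : 0 < N := by
    apply Finset.prod_pos
    intro i _
    apply Finset.prod_pos
    intro j _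
    exact Nat.mul_pos (u i j).pos (v i j).pos
  have hN : ∀ i j, (N:ℂ) * G i j ∈ O7 := by
    intro i j
    have h1 : (u i j).den * (v i j).den ∣ ∏ j', ((u i j').den * (v i j').den) :=
      Finset.dvd_prod_of_mem _ (Finset.mem_univ j)
    have h2 : (∏ j', ((u i j').den * (v i j').den)) ∣ N :=
      Finset.dvd_prod_of_mem (fun i' => ∏ j', ((u i' j').den * (v i' j').den))
        (Finset.mem_univ i)
    have hdvd := h1.trans h2
    obtain ⟨zu, hzu⟩ := clear_den (u i j) N ((dvd_mul_right _ _).trans hdvd)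
    obtain ⟨zv, hzv⟩ := clear_den (v i j) N ((dvd_mul_left _ _).trans hdvd)
    have hzuC : (N:ℂ) * ((u i j :ℚ):ℂ) = (zu:ℂ) := by exact_mod_cast hzu
    have hzvC : (N:ℂ) * ((v i j :ℚ):ℂ) = (zv:ℂ) := by exact_mod_cast hzv
    refine ⟨zu - zv, 2*zv, ?_⟩
    rw [huv i j, e7_alpha]
    push_cast
    linear_combination hzuC + (2*α7 - 1) * hzvC
  have hind : ∀ c d : ℂ, c • x 0 + d • x 1 = 0 → c = 0 ∧ d = 0 := by
    intro c d hcd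
    have hli := Fintype.linearIndependent_iff.mp hxind ![c, d] ?_
    · exact ⟨hli 0, hli 1⟩
    · rw [Fin.sum_univ_two]
      simpa using hcd
  have hGK' : ∀ i j, G i j ∈ K7 := fun i j => ⟨u i j, v i j, huv i j⟩
  have key := descent hG hGK' m hm0 hmle N hNpos hN
    ⌈(N:ℝ) * (star (x 0) ⬝ᵥ G.mulVec (x 0)).re⌉₊ (x 0) (x 1) (hxO 0) (hxO 1) hind
    (Nat.le_ceil _)
  rw [Matrix.det_fin_two]
  simpa using key
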